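/- For every n ≥ 1, the increments of h_n satisfy h_n − h_{n−1} = ∑_{k=1}^{n} (1/k!) ∑_{ℓ_1,…,ℓ_k ≥ 1, ℓ_1+…+ℓ_k = n} ∏_{i=1}^{k} (e^{−α_{ℓ_i}} − 1)/ℓ_i, and consequently h_n = ∑_{k=0}^{n} (1/k!) ∑_{ℓ_1,…,ℓ_k ≥ 1, ℓ_1+…+ℓ_k ≤ n} ∏_{i=1}^{k} (e^{−α_{ℓ_i}} − 1)/ℓ_i (the k = 0 term being 1). -/

import Mathlib

open Finset Filter

/-- Length of the cycle of `π` containing `i` (1 for fixed points). -/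
noncomputable def cycleLen {n : ℕ} (π : Equiv.Perm (Fin n)) (i : Fin n) : ℕ :=
  Function.minimalPeriod π i

/-- `numCycles π ℓ` = number of cycles of `π` of length `ℓ` (counting fixed points as 1-cycles). -/
noncomputable def numCycles {n : ℕ} (π : Equiv.Perm (Fin n)) (ℓ : ℕ) : ℕ :=
  (Finset.univ.filter fun i => cycleLen π i = ℓ).card / ℓ

/-- The total cycle weight `∑_ℓ α_ℓ r_ℓ(π)`. -/
noncomputable def cycleWeight (α : ℕ → ℝ) {n : ℕ} (π : Equiv.Perm (Fin n)) : ℝ :=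
  ∑ ℓ ∈ Finset.Icc 1 n, α ℓ * (numCycles π ℓ : ℝ)

/-- The normalization `h_n = (1/n!) ∑_{π ∈ S_n} exp(-∑_ℓ α_ℓ r_ℓ(π))`; `h_0 = 1`. -/
noncomputable def hseq (α : ℕ → ℝ) (n : ℕ) : ℝ :=
  (1 / (n.factorial : ℝ)) * ∑ π : Equiv.Perm (Fin n), Real.exp (-(cycleWeight α π))

/-- `N_{a,b}(π) = ∑_{ℓ=a}^b ℓ r_ℓ(π)`, the number of indices in cycles of length between `a` and `b`. -/
noncomputable def Nab {n : ℕ} (a b : ℕ) (π : Equiv.Perm (Fin n)) : ℕ :=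
  ∑ ℓ ∈ Finset.Icc a b, ℓ * numCycles π ℓ

/-- Expectation under `p_n(π) = exp(-∑_ℓ α_ℓ r_ℓ(π)) / (h_n n!)`. -/
noncomputable def En (α : ℕ → ℝ) (n : ℕ) (f : Equiv.Perm (Fin n) → ℝ) : ℝ :=
  (∑ π : Equiv.Perm (Fin n), f π * Real.exp (-(cycleWeight α π))) / (hseq α n * (n.factorial : ℝ))


section Part0
open Function Equiv

variable {n : ℕ} (π : Equiv.Perm (Fin n))

lemma isPeriodic_orderOf (x : Fin n) : IsPeriodicPt ⇑π (orderOf π) x := by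
  unfold IsPeriodicPt IsFixedPt
  rw [← Equiv.Perm.coe_pow, pow_orderOf_eq_one]; rfl

lemma mem_periodicPts (x : Fin n) : x ∈ periodicPts ⇑π :=
  ⟨orderOf π, orderOf_pos π, isPeriodic_orderOf π x⟩

lemma cycleLen_pos (x : Fin n) : 0 < cycleLen π x :=
  Function.minimalPeriod_pos_of_mem_periodicPts (mem_periodicPts π x)

lemma sameCycle_iff_exists (q x : Fin n) :
    π.SameCycle q x ↔ ∃ k < cycleLen π q, (⇑π)^[k] q = x := by
  constructor
  · intro h
    obtain ⟨i, _, hi⟩ := h.exists_pow_eq'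
    refine ⟨i % cycleLen π q, Nat.mod_lt _ (cycleLen_pos π q), ?_⟩
    rw [cycleLen, iterate_mod_minimalPeriod_eq, ← Equiv.Perm.coe_pow]
    exact hi
  · rintro ⟨k, _, hk⟩
    exact ⟨(k : ℤ), by rw [zpow_natCast, Equiv.Perm.coe_pow]; exact hk⟩

/-- The orbit of `q` as a finset. -/
noncomputable def orb (q : Fin n) : Finset (Fin n) :=
  Finset.image (fun k => (⇑π)^[k] q) (Finset.range (cycleLen π q))

lemma mem_orb_iff (q x : Fin n) : x ∈ orb π q ↔ π.SameCycle q x := by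
  rw [orb, Finset.mem_image, sameCycle_iff_exists]
  simp only [Finset.mem_range]

lemma orb_card (q : Fin n) : (orb π q).card = cycleLen π q := by
  rw [orb, Finset.card_image_of_injOn, Finset.card_range]
  intro a ha b hb hab
  exact iterate_injOn_Iio_minimalPeriod (by simpa [cycleLen] using ha) (by simpa [cycleLen] using hb) hab

lemma cycleLen_sameCycle {q x : Fin n} (h : π.SameCycle q x) :
    cycleLen π x = cycleLen π q := by
  rw [sameCycle_iff_exists] at h
  obtain ⟨k, _, hk⟩ := h
  rw [← hk, cycleLen, cycleLen, minimalPeriod_apply_iterate (mem_periodicPts π q)]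

lemma cycleLen_le (x : Fin n) : cycleLen π x ≤ n := by
  calc cycleLen π x = (orb π x).card := (orb_card π x).symm
  _ ≤ (Finset.univ : Finset (Fin n)).card := Finset.card_le_card (Finset.subset_univ _)
  _ = n := by simp

lemma orb_eq_of_sameCycle {q x : Fin n} (h : π.SameCycle q x) : orb π x = orb π q := by
  ext y
  rw [mem_orb_iff, mem_orb_iff]
  exact ⟨fun hy => h.trans hy, fun hy => h.symm.trans hy⟩

/-- The number of points with cycle length `ℓ` is `ℓ` times the number of such cycles. -/
lemma card_cycleLen_eq (ℓ : ℕ) (hℓ : 0 < ℓ) :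
    (Finset.univ.filter fun i => cycleLen π i = ℓ).card = ℓ * numCycles π ℓ := by
  set S := Finset.univ.filter fun i => cycleLen π i = ℓ with hS
  have key : S.card = ℓ * (S.image (orb π)).card := by
    rw [Finset.card_eq_sum_card_fiberwise (f := orb π) (t := S.image (orb π))
      (fun x hx => Finset.mem_image_of_mem _ hx)]
    rw [Finset.sum_congr rfl (g := fun _ => ℓ), Finset.sum_const, smul_eq_mul, mul_comm]
    intro t ht
    obtain ⟨i, hi, rfl⟩ := Finset.mem_image.1 ht
    have hiℓ : cycleLen π i = ℓ := by simpa [hS] using hi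
    have : S.filter (fun j => orb π j = orb π i) = orb π i := by
      ext j
      simp only [Finset.mem_filter, hS, Finset.mem_univ, true_and]
      constructor
      · rintro ⟨_, hj⟩
        rw [← hj, mem_orb_iff]
      · intro hj
        rw [mem_orb_iff] at hj
        exact ⟨by rw [cycleLen_sameCycle π hj, hiℓ], orb_eq_of_sameCycle π hj⟩
    rw [this, orb_card, hiℓ]
  rw [key, numCycles, ← hS, key, Nat.mul_div_cancel_left _ hℓ]

/-- Master pointwise formula for cycle-statistics sums. -/
lemma sum_cycleStat (c : ℕ → ℝ) :
    ∑ ℓ ∈ Finset.Icc 1 n, c ℓ * (numCycles π ℓ : ℝ) =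
      ∑ i : Fin n, c (cycleLen π i) / (cycleLen π i : ℝ) := by
  rw [← Finset.sum_fiberwise_of_maps_to (g := fun i => cycleLen π i)
    (t := Finset.Icc 1 n)
    (fun x _ => Finset.mem_Icc.2 ⟨cycleLen_pos π x, cycleLen_le π x⟩)
    (fun i => c (cycleLen π i) / (cycleLen π i : ℝ))]
  refine Finset.sum_congr rfl fun ℓ hℓ => ?_
  have hℓ1 : 0 < ℓ := (Finset.mem_Icc.1 hℓ).1
  have : ∀ x ∈ Finset.univ.filter fun i => cycleLen π i = ℓ,
      c (cycleLen π x) / (cycleLen π x : ℝ) = c ℓ / (ℓ : ℝ) := by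
    intro x hx
    rw [(Finset.mem_filter.1 hx).2]
  rw [Finset.sum_congr rfl this, Finset.sum_const, nsmul_eq_mul, card_cycleLen_eq π ℓ hℓ1]
  have hℓR : (ℓ : ℝ) ≠ 0 := Nat.cast_ne_zero.2 hℓ1.ne'
  push_cast
  field_simp

lemma cycleWeight_eq (α : ℕ → ℝ) :
    cycleWeight α π = ∑ i : Fin n, α (cycleLen π i) / (cycleLen π i : ℝ) :=
  sum_cycleStat π α

end Part0

section Part1
open Function Equiv

variable {n : ℕ}

lemma cycleLen_conj (σ π : Equiv.Perm (Fin n)) (x : Fin n) :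
    cycleLen (σ * π * σ⁻¹) (σ x) = cycleLen π x := by
  have key : ∀ k, IsPeriodicPt ⇑(σ * π * σ⁻¹) k (σ x) ↔ IsPeriodicPt ⇑π k x := by
    intro k
    unfold IsPeriodicPt IsFixedPt
    rw [← Equiv.Perm.coe_pow, ← Equiv.Perm.coe_pow, conj_pow]
    simp [Equiv.Perm.mul_apply]
  unfold cycleLen
  exact Nat.dvd_antisymm
    (((key _).2 (Function.isPeriodicPt_minimalPeriod _ _)).minimalPeriod_dvd)
    (((key _).1 (Function.isPeriodicPt_minimalPeriod _ _)).minimalPeriod_dvd)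

lemma cycleWeight_conj (α : ℕ → ℝ) (σ π : Equiv.Perm (Fin n)) :
    cycleWeight α (σ * π * σ⁻¹) = cycleWeight α π := by
  rw [cycleWeight_eq, cycleWeight_eq,
    ← Equiv.sum_comp σ (fun i => α (cycleLen (σ * π * σ⁻¹) i) / (cycleLen (σ * π * σ⁻¹) i : ℝ))]
  exact Finset.sum_congr rfl fun x _ => by rw [cycleLen_conj]

variable {m : ℕ} (τ : Equiv.Perm (Fin m))

/-! ### Case `p = 0` -/

lemma dec0_apply_succ (x : Fin m) :
    (Equiv.Perm.decomposeFin.symm (0, τ)) x.succ = (τ x).succ := by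
  rw [Equiv.Perm.decomposeFin_symm_apply_succ, Equiv.swap_self]
  rfl

lemma dec0_iterate (k : ℕ) (x : Fin m) :
    (⇑(Equiv.Perm.decomposeFin.symm (0, τ) : Equiv.Perm (Fin (m + 1))))^[k] x.succ
      = ((⇑τ)^[k] x).succ := by
  induction k with
  | zero => rfl
  | succ k ih => rw [Function.iterate_succ_apply', ih, dec0_apply_succ, Function.iterate_succ_apply']

lemma dec0_cycleLen_succ (x : Fin m) :
    cycleLen (Equiv.Perm.decomposeFin.symm (0, τ)) x.succ = cycleLen τ x := by
  set π : Equiv.Perm (Fin (m + 1)) := Equiv.Perm.decomposeFin.symm (0, τ)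
  have key : ∀ k, IsPeriodicPt ⇑π k x.succ ↔ IsPeriodicPt ⇑τ k x := by
    intro k
    unfold IsPeriodicPt IsFixedPt
    rw [dec0_iterate, Fin.succ_inj]
  unfold cycleLen
  exact Nat.dvd_antisymm
    (((key _).2 (Function.isPeriodicPt_minimalPeriod _ _)).minimalPeriod_dvd)
    (((key _).1 (Function.isPeriodicPt_minimalPeriod _ _)).minimalPeriod_dvd)

lemma dec0_cycleLen_zero :
    cycleLen (Equiv.Perm.decomposeFin.symm (0, τ)) 0 = 1 :=
  Function.minimalPeriod_eq_one_iff_isFixedPt.2 (by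
    show (Equiv.Perm.decomposeFin.symm (0, τ)) 0 = 0
    simp)

lemma dec0_cycleWeight (α : ℕ → ℝ) :
    cycleWeight α (Equiv.Perm.decomposeFin.symm (0, τ)) = α 1 + cycleWeight α τ := by
  rw [cycleWeight_eq, cycleWeight_eq, Fin.sum_univ_succ, dec0_cycleLen_zero]
  norm_num
  exact Finset.sum_congr rfl fun x _ => by rw [dec0_cycleLen_succ]

/-! ### Case `p = q.succ` -/

variable (q : Fin m)

lemma decS_apply_zero :
    (Equiv.Perm.decomposeFin.symm (q.succ, τ)) 0 = q.succ := by simp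

lemma decS_apply_succ (x : Fin m) :
    (Equiv.Perm.decomposeFin.symm (q.succ, τ)) x.succ
      = if τ x = q then 0 else (τ x).succ := by
  rw [Equiv.Perm.decomposeFin_symm_apply_succ]
  rcases eq_or_ne (τ x) q with h | h
  · rw [if_pos h, h, Equiv.swap_apply_right]
  · rw [if_neg h, Equiv.swap_apply_of_ne_of_ne (Fin.succ_ne_zero _) (by
      rw [Ne, Fin.succ_inj]; exact h)]

lemma decS_iterate_zero {k : ℕ} (hk : k < cycleLen τ q) :
    (⇑(Equiv.Perm.decomposeFin.symm (q.succ, τ) : Equiv.Perm (Fin (m + 1))))^[k + 1] 0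
      = ((⇑τ)^[k] q).succ := by
  induction k with
  | zero =>
    show (Equiv.Perm.decomposeFin.symm (q.succ, τ)) 0 = q.succ
    simp
  | succ k ih =>
    rw [Function.iterate_succ_apply', ih (Nat.lt_of_succ_lt hk), decS_apply_succ]
    have hne : τ ((⇑τ)^[k] q) ≠ q := by
      intro h
      have hp : IsPeriodicPt ⇑τ (k + 1) q := by
        unfold IsPeriodicPt IsFixedPt
        rw [Function.iterate_succ_apply', h]
      exact absurd (hp.minimalPeriod_le (Nat.succ_pos k)) (Nat.not_le.2 hk)
    rw [if_neg hne, Function.iterate_succ_apply']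

lemma decS_iterate_zero_top :
    (⇑(Equiv.Perm.decomposeFin.symm (q.succ, τ) : Equiv.Perm (Fin (m + 1))))^[cycleLen τ q + 1] 0
      = 0 := by
  have hL : 0 < cycleLen τ q := cycleLen_pos τ q
  obtain ⟨L, hLeq⟩ : ∃ L, cycleLen τ q = L + 1 := ⟨cycleLen τ q - 1, (Nat.succ_pred_eq_of_pos hL).symm⟩
  rw [hLeq, Function.iterate_succ_apply', decS_iterate_zero τ q (by omega), decS_apply_succ]
  have : τ ((⇑τ)^[L] q) = q := by
    have h2 : (⇑τ)^[L + 1] q = q := by rw [← hLeq]; exact Function.iterate_minimalPeriod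
    rw [Function.iterate_succ_apply'] at h2
    exact h2
  rw [if_pos this]

lemma decS_cycleLen_zero :
    cycleLen (Equiv.Perm.decomposeFin.symm (q.succ, τ)) 0 = cycleLen τ q + 1 := by
  set π : Equiv.Perm (Fin (m + 1)) := Equiv.Perm.decomposeFin.symm (q.succ, τ)
  set L := cycleLen τ q
  have hper : IsPeriodicPt ⇑π (L + 1) (0 : Fin (m + 1)) := decS_iterate_zero_top τ q
  have hle : cycleLen π 0 ≤ L + 1 := hper.minimalPeriod_le (Nat.succ_pos L)
  have hpos : 0 < cycleLen π 0 := cycleLen_pos π 0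
  rcases Nat.lt_or_ge (cycleLen π 0) (L + 1) with hlt | hge
  · exfalso
    have h1 : (⇑π)^[cycleLen π 0] (0 : Fin (m + 1)) = 0 := Function.iterate_minimalPeriod
    obtain ⟨k, hk⟩ : ∃ k, cycleLen π 0 = k + 1 := ⟨cycleLen π 0 - 1, (Nat.succ_pred_eq_of_pos hpos).symm⟩
    rw [hk] at h1
    rw [decS_iterate_zero τ q (by omega)] at h1
    exact Fin.succ_ne_zero _ h1
  · omega

lemma decS_cycleLen_succ_sameCycle {x : Fin m} (h : τ.SameCycle q x) :
    cycleLen (Equiv.Perm.decomposeFin.symm (q.succ, τ)) x.succ = cycleLen τ q + 1 := by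
  set π : Equiv.Perm (Fin (m + 1)) := Equiv.Perm.decomposeFin.symm (q.succ, τ)
  rw [sameCycle_iff_exists] at h
  obtain ⟨k, hk, rfl⟩ := h
  have : ((⇑τ)^[k] q).succ = (⇑π)^[k + 1] (0 : Fin (m + 1)) := (decS_iterate_zero τ q hk).symm
  rw [this]
  unfold cycleLen
  rw [Function.minimalPeriod_apply_iterate (mem_periodicPts π 0)]
  exact decS_cycleLen_zero τ q

lemma decS_iterate_succ {x : Fin m} (h : ¬ τ.SameCycle q x) (k : ℕ) :
    (⇑(Equiv.Perm.decomposeFin.symm (q.succ, τ) : Equiv.Perm (Fin (m + 1))))^[k] x.succ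
      = ((⇑τ)^[k] x).succ := by
  induction k with
  | zero => rfl
  | succ k ih =>
    rw [Function.iterate_succ_apply', ih, decS_apply_succ]
    have hne : τ ((⇑τ)^[k] x) ≠ q := by
      intro hc
      refine h (Equiv.Perm.SameCycle.symm ⟨((k + 1 : ℕ) : ℤ), ?_⟩)
      rw [zpow_natCast, Equiv.Perm.coe_pow, Function.iterate_succ_apply' (⇑τ) k x, hc]
    rw [if_neg hne, Function.iterate_succ_apply']

lemma decS_cycleLen_succ_not {x : Fin m} (h : ¬ τ.SameCycle q x) :
    cycleLen (Equiv.Perm.decomposeFin.symm (q.succ, τ)) x.succ = cycleLen τ x := by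
  set π : Equiv.Perm (Fin (m + 1)) := Equiv.Perm.decomposeFin.symm (q.succ, τ)
  have key : ∀ k, IsPeriodicPt ⇑π k x.succ ↔ IsPeriodicPt ⇑τ k x := by
    intro k
    unfold IsPeriodicPt IsFixedPt
    rw [decS_iterate_succ τ q h, Fin.succ_inj]
  unfold cycleLen
  exact Nat.dvd_antisymm
    (((key _).2 (Function.isPeriodicPt_minimalPeriod _ _)).minimalPeriod_dvd)
    (((key _).1 (Function.isPeriodicPt_minimalPeriod _ _)).minimalPeriod_dvd)

lemma decS_cycleWeight (α : ℕ → ℝ) :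
    cycleWeight α (Equiv.Perm.decomposeFin.symm (q.succ, τ))
      = cycleWeight α τ + α (cycleLen τ q + 1) - α (cycleLen τ q) := by
  set π : Equiv.Perm (Fin (m + 1)) := Equiv.Perm.decomposeFin.symm (q.succ, τ)
  have hLpos : 0 < cycleLen τ q := cycleLen_pos τ q
  rw [cycleWeight_eq, cycleWeight_eq, Fin.sum_univ_succ, decS_cycleLen_zero]
  rw [← Finset.sum_add_sum_compl (orb τ q)
        (fun x => α (cycleLen π x.succ) / (cycleLen π x.succ : ℝ)),
      ← Finset.sum_add_sum_compl (orb τ q) (fun x => α (cycleLen τ x) / (cycleLen τ x : ℝ))]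
  have h1 : ∑ x ∈ orb τ q, α (cycleLen π x.succ) / (cycleLen π x.succ : ℝ)
      = (cycleLen τ q : ℝ) * (α (cycleLen τ q + 1) / ((cycleLen τ q + 1 : ℕ) : ℝ)) := by
    rw [Finset.sum_congr rfl (fun x hx => by
      rw [decS_cycleLen_succ_sameCycle τ q ((mem_orb_iff τ q x).1 hx)]),
      Finset.sum_const, nsmul_eq_mul, orb_card]
  have h2 : ∑ x ∈ orb τ q, α (cycleLen τ x) / (cycleLen τ x : ℝ)
      = (cycleLen τ q : ℝ) * (α (cycleLen τ q) / (cycleLen τ q : ℝ)) := by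
    rw [Finset.sum_congr rfl (fun x hx => by
      rw [cycleLen_sameCycle τ ((mem_orb_iff τ q x).1 hx)]),
      Finset.sum_const, nsmul_eq_mul, orb_card]
  have h3 : ∑ x ∈ (orb τ q)ᶜ, α (cycleLen π x.succ) / (cycleLen π x.succ : ℝ)
      = ∑ x ∈ (orb τ q)ᶜ, α (cycleLen τ x) / (cycleLen τ x : ℝ) := by
    refine Finset.sum_congr rfl fun x hx => ?_
    rw [decS_cycleLen_succ_not τ q (fun hc => (Finset.mem_compl.1 hx) ((mem_orb_iff τ q x).2 hc))]
  rw [h1, h2, h3]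
  set L := cycleLen τ q with hL
  have hLR : (L : ℝ) ≠ 0 := Nat.cast_ne_zero.2 hLpos.ne'
  have hL1 : ((L : ℝ) + 1) ≠ 0 := by positivity
  push_cast
  field_simp
  ring

end Part1

section Part2
open Equiv Function

variable (α : ℕ → ℝ)

noncomputable def Eex {m : ℕ} (π : Equiv.Perm (Fin m)) : ℝ := Real.exp (-(cycleWeight α π))

noncomputable def Fsum (m : ℕ) : ℝ := ∑ π : Equiv.Perm (Fin m), Eex α π

noncomputable def Bsum (m ℓ : ℕ) : ℝ :=
  ∑ π : Equiv.Perm (Fin (m + 1)), if cycleLen π 0 = ℓ then Eex α π else 0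

noncomputable def Csum {m : ℕ} (q : Fin m) (ℓ : ℕ) : ℝ :=
  ∑ τ : Equiv.Perm (Fin m), if cycleLen τ q = ℓ then Eex α τ else 0

lemma F_split (m : ℕ) : Fsum α (m + 1) = ∑ ℓ ∈ Finset.Icc 1 (m + 1), Bsum α m ℓ := by
  unfold Fsum Bsum
  rw [Finset.sum_comm]
  refine Finset.sum_congr rfl fun π _ => ?_
  rw [Finset.sum_ite_eq (Finset.Icc 1 (m + 1)) (cycleLen π 0) (fun _ => Eex α π),
    if_pos (Finset.mem_Icc.2 ⟨cycleLen_pos π 0, cycleLen_le π 0⟩)]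

lemma sum_perm_succ {m : ℕ} (f : Equiv.Perm (Fin (m + 1)) → ℝ) :
    ∑ π : Equiv.Perm (Fin (m + 1)), f π
      = ∑ p : Fin (m + 1), ∑ τ : Equiv.Perm (Fin m), f (Equiv.Perm.decomposeFin.symm (p, τ)) := by
  calc ∑ π : Equiv.Perm (Fin (m + 1)), f π
      = ∑ x : Fin (m + 1) × Equiv.Perm (Fin m), f (Equiv.Perm.decomposeFin.symm x) :=
        (Equiv.sum_comp Equiv.Perm.decomposeFin.symm f).symm
    _ = _ := Fintype.sum_prod_type _

lemma B_one (m : ℕ) : Bsum α m 1 = Real.exp (-(α 1)) * Fsum α m := by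
  unfold Bsum
  rw [sum_perm_succ]
  have key : ∀ p : Fin (m + 1), ∀ τ : Equiv.Perm (Fin m),
      (if cycleLen (Equiv.Perm.decomposeFin.symm (p, τ)) 0 = 1
        then Eex α (Equiv.Perm.decomposeFin.symm (p, τ)) else 0)
      = if p = 0 then Real.exp (-(α 1)) * Eex α τ else 0 := by
    intro p τ
    rcases eq_or_ne p 0 with rfl | hp
    · rw [if_pos (dec0_cycleLen_zero τ), if_pos rfl]
      unfold Eex
      rw [dec0_cycleWeight, neg_add, Real.exp_add]
    · rw [if_neg, if_neg hp]
      intro hc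
      have : (Equiv.Perm.decomposeFin.symm (p, τ)) 0 = 0 :=
        Function.minimalPeriod_eq_one_iff_isFixedPt.1 hc
      rw [Equiv.Perm.decomposeFin_symm_apply_zero] at this
      exact hp this
  rw [Finset.sum_congr rfl fun p _ => Finset.sum_congr rfl fun τ _ => key p τ]
  rw [Finset.sum_comm]
  unfold Fsum
  rw [Finset.mul_sum]
  refine Finset.sum_congr rfl fun τ _ => ?_
  rw [Finset.sum_ite_eq' Finset.univ (0 : Fin (m + 1)) (fun _ => Real.exp (-(α 1)) * Eex α τ),
    if_pos (Finset.mem_univ _)]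

lemma B_step (m L : ℕ) (hL : 1 ≤ L) :
    Bsum α m (L + 1) = Real.exp (α L - α (L + 1)) * ∑ q : Fin m, Csum α q L := by
  unfold Bsum
  rw [sum_perm_succ, Fin.sum_univ_succ]
  have h0 : ∀ τ : Equiv.Perm (Fin m),
      (if cycleLen (Equiv.Perm.decomposeFin.symm ((0 : Fin (m + 1)), τ)) 0 = L + 1
        then Eex α (Equiv.Perm.decomposeFin.symm (0, τ)) else 0) = 0 := by
    intro τ
    rw [if_neg]
    rw [dec0_cycleLen_zero]
    omega
  rw [Finset.sum_congr rfl fun τ _ => h0 τ, Finset.sum_const_zero, zero_add, Finset.mul_sum]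
  refine Finset.sum_congr rfl fun q _ => ?_
  unfold Csum
  rw [Finset.mul_sum]
  refine Finset.sum_congr rfl fun τ _ => ?_
  rw [decS_cycleLen_zero]
  rcases eq_or_ne (cycleLen τ q) L with h | h
  · rw [if_pos (by omega), if_pos h]
    unfold Eex
    rw [decS_cycleWeight, h, ← Real.exp_add]
    congr 1
    ring
  · rw [if_neg (by omega), if_neg h, mul_zero]

lemma C_symm {m : ℕ} (q q' : Fin m) (L : ℕ) : Csum α q L = Csum α q' L := by
  unfold Csum
  set σ : Equiv.Perm (Fin m) := Equiv.swap q q' with hσ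
  have hσq : σ q' = q := Equiv.swap_apply_right q q'
  have : ∀ ρ : Equiv.Perm (Fin m),
      (if cycleLen (σ * ρ * σ⁻¹) q = L then Eex α (σ * ρ * σ⁻¹) else 0)
        = if cycleLen ρ q' = L then Eex α ρ else 0 := by
    intro ρ
    rw [← hσq, cycleLen_conj]
    unfold Eex
    rw [cycleWeight_conj]
  rw [← Finset.sum_congr rfl fun ρ _ => this ρ]
  exact Fintype.sum_equiv ((Equiv.mulLeft σ).trans (Equiv.mulRight σ⁻¹))
    (fun ρ => if cycleLen (σ * ρ * σ⁻¹) q = L then Eex α (σ * ρ * σ⁻¹) else 0)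
    (fun τ => if cycleLen τ q = L then Eex α τ else 0)
    (fun ρ => by simp only [Equiv.trans_apply, Equiv.coe_mulLeft, Equiv.coe_mulRight]; rfl) |>.symm

lemma C_zero_eq_B (r : ℕ) (L : ℕ) : Csum α (0 : Fin (r + 1)) L = Bsum α r L := rfl

end Part2

section Part2b
open Equiv Function

variable (α : ℕ → ℝ)

lemma B_closed : ∀ ℓ m : ℕ, 1 ≤ ℓ → ℓ ≤ m + 1 →
    Bsum α m ℓ = Real.exp (-(α ℓ)) *
      ((m.factorial : ℝ) / ((m + 1 - ℓ).factorial : ℝ)) * Fsum α (m + 1 - ℓ) := by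
  intro ℓ
  induction ℓ with
  | zero => omega
  | succ ℓ ih =>
    intro m h1 h2
    rcases Nat.eq_zero_or_pos ℓ with rfl | hℓpos
    · have : m + 1 - 1 = m := by omega
      rw [this, B_one, div_self (by positivity : (m.factorial : ℝ) ≠ 0), mul_one]
    · obtain ⟨r, rfl⟩ : ∃ r, m = r + 1 := ⟨m - 1, by omega⟩
      rw [B_step α _ ℓ hℓpos]
      have hsym : ∀ q : Fin (r + 1), Csum α q ℓ = Bsum α r ℓ := fun q => by
        rw [C_symm α q 0, C_zero_eq_B]
      rw [Finset.sum_congr rfl fun q _ => hsym q, Finset.sum_const, nsmul_eq_mul]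
      have hrank : (r + 1 + 1) - (ℓ + 1) = r + 1 - ℓ := by omega
      rw [Finset.card_univ, Fintype.card_fin, ih r hℓpos (by omega), hrank]
      have hexp : Real.exp (α ℓ - α (ℓ + 1)) * Real.exp (-α ℓ) = Real.exp (-α (ℓ + 1)) := by
        rw [← Real.exp_add]
        ring_nf
      rw [Nat.factorial_succ, ← hexp]
      push_cast
      ring

lemma F_rec (m : ℕ) : Fsum α (m + 1) = ∑ ℓ ∈ Finset.Icc 1 (m + 1),
    Real.exp (-(α ℓ)) * ((m.factorial : ℝ) / ((m + 1 - ℓ).factorial : ℝ)) * Fsum α (m + 1 - ℓ) := by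
  rw [F_split]
  exact Finset.sum_congr rfl fun ℓ hℓ => by
    rw [B_closed α ℓ m (Finset.mem_Icc.1 hℓ).1 (Finset.mem_Icc.1 hℓ).2]

lemma F_eq_hseq (k : ℕ) : Fsum α k = (k.factorial : ℝ) * hseq α k := by
  unfold Fsum hseq Eex
  rw [← mul_assoc, mul_one_div, div_self (by positivity : (k.factorial : ℝ) ≠ 0), one_mul]

/-- The key recursion `(m+1) h_{m+1} = ∑_{ℓ=1}^{m+1} e^{-α_ℓ} h_{m+1-ℓ}`. -/
lemma hseq_rec (m : ℕ) : ((m : ℝ) + 1) * hseq α (m + 1)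
    = ∑ ℓ ∈ Finset.Icc 1 (m + 1), Real.exp (-(α ℓ)) * hseq α (m + 1 - ℓ) := by
  have hm : (m.factorial : ℝ) ≠ 0 := by positivity
  apply mul_left_cancel₀ hm
  have lhs : (m.factorial : ℝ) * (((m : ℝ) + 1) * hseq α (m + 1)) = Fsum α (m + 1) := by
    rw [F_eq_hseq, Nat.factorial_succ]
    push_cast
    ring
  rw [lhs, F_rec, Finset.mul_sum]
  refine Finset.sum_congr rfl fun ℓ hℓ => ?_
  rw [F_eq_hseq]
  have hne : (((m + 1 - ℓ).factorial : ℝ)) ≠ 0 := by positivity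
  field_simp

lemma hseq_zero : hseq α 0 = 1 := by
  unfold hseq
  have h1 : ∀ π : Equiv.Perm (Fin 0), cycleWeight α π = 0 := by
    intro π
    unfold cycleWeight
    simp
  rw [Finset.sum_congr rfl fun π _ => by rw [h1 π, neg_zero, Real.exp_zero]]
  rw [Finset.sum_const, nsmul_eq_mul, Finset.card_univ]
  simp [Fintype.card_perm]

end Part2b

section Part3
open Finset

variable (α : ℕ → ℝ)

/-- One term of the explicit formula. -/
noncomputable def Aterm (k m : ℕ) : ℝ :=
  (1 / (k.factorial : ℝ)) *
    ∑ ℓ ∈ (Finset.Nat.antidiagonalTuple k m).filter (fun ℓ => ∀ i, 1 ≤ ℓ i),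
      ∏ i, (Real.exp (-α (ℓ i)) - 1) / (ℓ i : ℝ)

noncomputable def aseq (m : ℕ) : ℝ := ∑ k ∈ Finset.range (m + 1), Aterm α k m

noncomputable def Gseq (N : ℕ) : ℝ := ∑ m ∈ Finset.range (N + 1), aseq α m

lemma Aterm_filter_empty {k m : ℕ} (h : m < k) :
    (Finset.Nat.antidiagonalTuple k m).filter (fun ℓ => ∀ i, 1 ≤ ℓ i) = ∅ := by
  rw [Finset.eq_empty_iff_forall_notMem]
  intro ℓ hℓ
  rw [Finset.mem_filter, Finset.Nat.mem_antidiagonalTuple] at hℓ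
  obtain ⟨hsum, hpos⟩ := hℓ
  have : (Finset.univ : Finset (Fin k)).card • 1 ≤ ∑ i, ℓ i :=
    Finset.card_nsmul_le_sum _ _ _ (fun i _ => hpos i)
  simp only [Finset.card_univ, Fintype.card_fin, smul_eq_mul, mul_one] at this
  omega

lemma Aterm_eq_zero {k m : ℕ} (h : m < k) : Aterm α k m = 0 := by
  rw [Aterm, Aterm_filter_empty h, Finset.sum_empty, mul_zero]

lemma Aterm_zero_zero : Aterm α 0 0 = 1 := by
  rw [Aterm]
  rw [Finset.Nat.antidiagonalTuple_zero_zero]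
  rw [Finset.filter_singleton, if_pos (fun i => i.elim0)]
  simp

lemma Aterm_zero_pos {m : ℕ} (h : 1 ≤ m) : Aterm α 0 m = 0 := by
  obtain ⟨r, rfl⟩ : ∃ r, m = r + 1 := ⟨m - 1, by omega⟩
  rw [Aterm, Finset.Nat.antidiagonalTuple_zero_succ]
  simp

/-- Key tuple-insertion recursion. -/
lemma Aterm_rec (k m : ℕ) :
    (m : ℝ) * Aterm α (k + 1) m
      = ∑ c ∈ Finset.Icc 1 m, (Real.exp (-α c) - 1) * Aterm α k (m - c) := by
  classical
  set F : ℕ → ℝ := fun y => (Real.exp (-α y) - 1) / (y : ℝ) with hF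
  set T : Finset (Fin (k + 1) → ℕ) :=
    (Finset.Nat.antidiagonalTuple (k + 1) m).filter (fun ℓ => ∀ i, 1 ≤ ℓ i) with hT
  -- step 1: pointwise
  have step1 : ∀ ℓ ∈ T, (m : ℝ) * ∏ i, F (ℓ i)
      = ∑ i : Fin (k + 1), (Real.exp (-α (ℓ i)) - 1) * ∏ j : Fin k, F (ℓ (i.succAbove j)) := by
    intro ℓ hℓ
    rw [hT, Finset.mem_filter, Finset.Nat.mem_antidiagonalTuple] at hℓ
    obtain ⟨hsum, hpos⟩ := hℓ
    have hm : (m : ℝ) = ∑ i, (ℓ i : ℝ) := by rw [← hsum]; push_cast; ring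
    rw [hm, Finset.sum_mul]
    refine Finset.sum_congr rfl fun i _ => ?_
    rw [Fin.prod_univ_succAbove (fun j => F (ℓ j)) i]
    have hne : ((ℓ i : ℝ)) ≠ 0 := Nat.cast_ne_zero.2 (by have := hpos i; omega)
    have key : (ℓ i : ℝ) * F (ℓ i) = Real.exp (-α (ℓ i)) - 1 := by
      rw [hF]
      field_simp
    rw [← mul_assoc, key]
  -- step 3: for fixed i, reindex the sum over T
  have step3 : ∀ i : Fin (k + 1),
      ∑ ℓ ∈ T, (Real.exp (-α (ℓ i)) - 1) * ∏ j : Fin k, F (ℓ (i.succAbove j))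
        = ∑ c ∈ Finset.Icc 1 m, (Real.exp (-α c) - 1) *
            ∑ ℓ' ∈ (Finset.Nat.antidiagonalTuple k (m - c)).filter (fun ℓ' => ∀ j, 1 ≤ ℓ' j),
              ∏ j, F (ℓ' j) := by
    intro i
    rw [Finset.sum_congr rfl (fun c _ => Finset.mul_sum _ _ _),
      Finset.sum_sigma' (Finset.Icc 1 m)
        (fun c => (Finset.Nat.antidiagonalTuple k (m - c)).filter (fun ℓ' => ∀ j, 1 ≤ ℓ' j))
        (fun c ℓ' => (Real.exp (-α c) - 1) * ∏ j, F (ℓ' j))]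
    refine Finset.sum_nbij'
      (fun ℓ => (⟨ℓ i, fun j => ℓ (i.succAbove j)⟩ : (_ : ℕ) × (Fin k → ℕ)))
      (fun σ => i.insertNth σ.1 σ.2) ?_ ?_ ?_ ?_ ?_
    · intro ℓ hℓ
      try dsimp only
      rw [hT, Finset.mem_filter, Finset.Nat.mem_antidiagonalTuple] at hℓ
      obtain ⟨hsum, hpos⟩ := hℓ
      have hsplit : ∑ j, ℓ j = ℓ i + ∑ j : Fin k, ℓ (i.succAbove j) :=
        Fin.sum_univ_succAbove (fun j => ℓ j) i
      rw [Finset.mem_sigma, Finset.mem_Icc, Finset.mem_filter,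
        Finset.Nat.mem_antidiagonalTuple]
      refine ⟨⟨hpos i, ?_⟩, ?_, fun j => hpos _⟩
      · show ℓ i ≤ m
        omega
      · show ∑ j : Fin k, ℓ (i.succAbove j) = m - ℓ i
        omega
    · intro σ hσ
      try dsimp only
      rw [Finset.mem_sigma, Finset.mem_Icc, Finset.mem_filter,
        Finset.Nat.mem_antidiagonalTuple] at hσ
      obtain ⟨⟨hc1, hc2⟩, hsum, hpos⟩ := hσ
      rw [hT, Finset.mem_filter, Finset.Nat.mem_antidiagonalTuple]
      constructor
      · rw [Fin.sum_univ_succAbove (fun j => (i.insertNth σ.1 σ.2 : Fin (k+1) → ℕ) j) i]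
        simp only [Fin.insertNth_apply_same, Fin.insertNth_apply_succAbove]
        omega
      · intro t
        rcases eq_or_ne t i with rfl | ht
        · rw [Fin.insertNth_apply_same]; exact hc1
        · obtain ⟨j, rfl⟩ := Fin.exists_succAbove_eq ht
          rw [Fin.insertNth_apply_succAbove]; exact hpos j
    · intro ℓ hℓ
      try dsimp only
      exact Fin.insertNth_self_removeNth i ℓ
    · intro σ hσ
      try dsimp only
      refine Sigma.ext ?_ ?_
      · simp
      · simp only [Fin.insertNth_apply_same]
        refine heq_of_eq (funext fun j => ?_)
        rw [Fin.insertNth_apply_succAbove]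
    · intro ℓ hℓ
      rfl
  -- assemble
  have step2 : (m : ℝ) * ∑ ℓ ∈ T, ∏ i, F (ℓ i)
      = ∑ i : Fin (k + 1), ∑ ℓ ∈ T, (Real.exp (-α (ℓ i)) - 1) * ∏ j : Fin k, F (ℓ (i.succAbove j)) := by
    rw [Finset.mul_sum, Finset.sum_congr rfl step1, Finset.sum_comm]
  rw [Aterm, ← hT, ← mul_assoc, mul_comm (m : ℝ) (1 / (k + 1).factorial : ℝ), mul_assoc]
  have : ∑ ℓ ∈ T, ∏ i, (Real.exp (-α (ℓ i)) - 1) / (ℓ i : ℝ) = ∑ ℓ ∈ T, ∏ i, F (ℓ i) := rfl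
  rw [this, step2, Finset.sum_congr rfl (fun i (_ : i ∈ (Finset.univ : Finset (Fin (k+1)))) => step3 i),
    Finset.sum_const, Finset.card_univ, Fintype.card_fin, nsmul_eq_mul]
  rw [Finset.mul_sum, Finset.mul_sum]
  refine Finset.sum_congr rfl fun c hc => ?_
  rw [Aterm]
  have hfac : ((k + 1).factorial : ℝ) = (k + 1) * (k.factorial : ℝ) := by
    rw [Nat.factorial_succ]; push_cast; ring
  have h1 : (k.factorial : ℝ) ≠ 0 := by positivity
  have h2 : ((k : ℝ) + 1) ≠ 0 := by positivity
  rw [hfac]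
  push_cast
  field_simp
  ring
end Part3

section Part4
open Finset

variable (α : ℕ → ℝ)

lemma aseq_zero : aseq α 0 = 1 := by
  rw [aseq]
  simp [Aterm_zero_zero]

lemma Gseq_zero : Gseq α 0 = 1 := by
  rw [Gseq]
  simp [aseq_zero]

lemma sum_range_Aterm (j J : ℕ) (h : j ≤ J) :
    ∑ k ∈ Finset.range (J + 1), Aterm α k j = aseq α j := by
  rw [aseq]
  symm
  refine Finset.sum_subset ?_ ?_
  · intro x hx
    simp only [Finset.mem_range] at *
    omega
  · intro k hk hnk
    simp only [Finset.mem_range] at hk hnk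
    exact Aterm_eq_zero α (by omega)

lemma aseq_rec (m : ℕ) (hm : 1 ≤ m) :
    (m : ℝ) * aseq α m = ∑ c ∈ Finset.Icc 1 m, (Real.exp (-α c) - 1) * aseq α (m - c) := by
  obtain ⟨M, rfl⟩ : ∃ M, m = M + 1 := ⟨m - 1, by omega⟩
  rw [aseq, Finset.mul_sum, Finset.sum_range_succ', Aterm_zero_pos α hm, mul_zero, add_zero]
  rw [Finset.sum_congr rfl (fun k _ => Aterm_rec α k (M + 1)), Finset.sum_comm]
  refine Finset.sum_congr rfl fun c hc => ?_
  rw [← Finset.mul_sum]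
  congr 1
  have hc' := Finset.mem_Icc.1 hc
  exact sum_range_Aterm α (M + 1 - c) M (by omega)

lemma claimA (m : ℕ) :
    ∑ ℓ ∈ Finset.Icc 1 m, Gseq α (m - ℓ)
      = ∑ j ∈ Finset.range (m + 1), ((m : ℝ) - (j : ℝ)) * aseq α j := by
  have expand : ∀ ℓ ∈ Finset.Icc 1 m, Gseq α (m - ℓ)
      = ∑ j ∈ Finset.range (m + 1), if j ≤ m - ℓ then aseq α j else 0 := by
    intro ℓ hℓ
    rw [Gseq, ← Finset.sum_filter]
    congr 1
    ext x
    simp only [Finset.mem_filter, Finset.mem_range]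
    omega
  rw [Finset.sum_congr rfl expand, Finset.sum_comm]
  refine Finset.sum_congr rfl fun j hj => ?_
  rw [← Finset.sum_filter]
  have hj' : j ≤ m := by simpa using Nat.lt_succ_iff.1 (Finset.mem_range.1 hj)
  have hfil : (Finset.Icc 1 m).filter (fun ℓ => j ≤ m - ℓ) = Finset.Icc 1 (m - j) := by
    ext x
    simp only [Finset.mem_filter, Finset.mem_Icc]
    omega
  rw [hfil, Finset.sum_const, nsmul_eq_mul, Nat.card_Icc]
  have : ((m - j + 1 - 1 : ℕ) : ℝ) = (m : ℝ) - (j : ℝ) := by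
    have : m - j + 1 - 1 = m - j := by omega
    rw [this, Nat.cast_sub hj']
  rw [this]

lemma claimB (m : ℕ) :
    ∑ ℓ ∈ Finset.Icc 1 m, (Real.exp (-α ℓ) - 1) * Gseq α (m - ℓ)
      = ∑ j ∈ Finset.range (m + 1), (j : ℝ) * aseq α j := by
  have rhs : ∀ j ∈ Finset.range (m + 1), (j : ℝ) * aseq α j
      = ∑ ℓ ∈ Finset.Icc 1 j, (Real.exp (-α ℓ) - 1) * aseq α (j - ℓ) := by
    intro j _
    rcases Nat.eq_zero_or_pos j with rfl | hjpos
    · simp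
    · exact aseq_rec α j hjpos
  rw [Finset.sum_congr rfl rhs]
  have lhs : ∀ ℓ ∈ Finset.Icc 1 m, (Real.exp (-α ℓ) - 1) * Gseq α (m - ℓ)
      = ∑ j ∈ Finset.range (m + 1),
          if ℓ ≤ j then (Real.exp (-α ℓ) - 1) * aseq α (j - ℓ) else 0 := by
    intro ℓ hℓ
    have hℓ' := Finset.mem_Icc.1 hℓ
    rw [Gseq, Finset.mul_sum, ← Finset.sum_filter]
    refine Finset.sum_nbij' (fun i => i + ℓ) (fun j => j - ℓ) ?_ ?_ ?_ ?_ ?_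
    · intro a ha
      simp only [Finset.mem_range] at ha
      simp only [Finset.mem_filter, Finset.mem_range]
      omega
    · intro a ha
      simp only [Finset.mem_filter, Finset.mem_range] at ha
      simp only [Finset.mem_range]
      omega
    · intro a ha
      omega
    · intro a ha
      simp only [Finset.mem_filter, Finset.mem_range] at ha
      omega
    · intro a ha
      rw [show a + ℓ - ℓ = a from by omega]
  rw [Finset.sum_congr rfl lhs, Finset.sum_comm]
  refine Finset.sum_congr rfl fun j hj => ?_
  have hj' : j ≤ m := by simpa using Nat.lt_succ_iff.1 (Finset.mem_range.1 hj)
  rw [← Finset.sum_filter]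
  congr 1
  ext x
  simp only [Finset.mem_filter, Finset.mem_Icc]
  omega

lemma Gseq_rec (m : ℕ) :
    (m : ℝ) * Gseq α m = ∑ ℓ ∈ Finset.Icc 1 m, Real.exp (-α ℓ) * Gseq α (m - ℓ) := by
  have split : ∀ ℓ ∈ Finset.Icc 1 m, Real.exp (-α ℓ) * Gseq α (m - ℓ)
      = (Real.exp (-α ℓ) - 1) * Gseq α (m - ℓ) + Gseq α (m - ℓ) := by
    intro ℓ _
    ring
  rw [Finset.sum_congr rfl split, Finset.sum_add_distrib, claimA, claimB]
  rw [Gseq, Finset.mul_sum, ← Finset.sum_add_distrib]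
  refine Finset.sum_congr rfl fun j hj => ?_
  ring

lemma h_eq_G : ∀ N, hseq α N = Gseq α N := by
  intro N
  induction N using Nat.strong_induction_on with
  | _ N ih =>
    match N, ih with
    | 0, _ => rw [hseq_zero, Gseq_zero]
    | (m + 1), ih =>
      have h1 := hseq_rec α m
      have key : ∀ ℓ ∈ Finset.Icc 1 (m + 1), Real.exp (-(α ℓ)) * hseq α (m + 1 - ℓ)
          = Real.exp (-(α ℓ)) * Gseq α (m + 1 - ℓ) := by
        intro ℓ hℓ
        rw [ih (m + 1 - ℓ) (by have := (Finset.mem_Icc.1 hℓ).1; omega)]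
      rw [Finset.sum_congr rfl key] at h1
      have h2 := Gseq_rec α (m + 1)
      push_cast at h2
      have hm1 : ((m : ℝ) + 1) ≠ 0 := by positivity
      apply mul_left_cancel₀ hm1
      rw [h1]
      exact h2.symm

lemma range_to_Icc (f : ℕ → ℝ) (M : ℕ) :
    ∑ k ∈ Finset.range (M + 1), f (k + 1) = ∑ k ∈ Finset.Icc 1 (M + 1), f k := by
  refine Finset.sum_nbij' (fun k => k + 1) (fun k => k - 1) ?_ ?_ ?_ ?_ ?_
  · intro a ha
    simp only [Finset.mem_range] at ha
    simp only [Finset.mem_Icc]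
    omega
  · intro a ha
    simp only [Finset.mem_Icc] at ha
    simp only [Finset.mem_range]
    omega
  · intro a _
    omega
  · intro a ha
    simp only [Finset.mem_Icc] at ha
    omega
  · intro a _
    rfl

end Part4

/-- Increment formula and its consequence:
`h_n − h_{n−1} = ∑_{k=1}^n (1/k!) ∑_{ℓ_1+…+ℓ_k=n, ℓ_i≥1} ∏_i (e^{-α_{ℓ_i}}−1)/ℓ_i`, and
`h_n = ∑_{k=0}^n (1/k!) ∑_{ℓ_1+…+ℓ_k≤n, ℓ_i≥1} ∏_i (e^{-α_{ℓ_i}}−1)/ℓ_i`. -/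
theorem stmt4 (α : ℕ → ℝ) (n : ℕ) (hn : 1 ≤ n) :
    (hseq α n - hseq α (n - 1) = ∑ k ∈ Finset.Icc 1 n, (1 / (k.factorial : ℝ)) *
      ∑ ℓ ∈ (Finset.Nat.antidiagonalTuple k n).filter (fun ℓ => ∀ i, 1 ≤ ℓ i),
        ∏ i, (Real.exp (-α (ℓ i)) - 1) / (ℓ i : ℝ)) ∧
    (hseq α n = ∑ k ∈ Finset.range (n + 1), (1 / (k.factorial : ℝ)) *
      ∑ m ∈ Finset.range (n + 1),
        ∑ ℓ ∈ (Finset.Nat.antidiagonalTuple k m).filter (fun ℓ => ∀ i, 1 ≤ ℓ i),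
          ∏ i, (Real.exp (-α (ℓ i)) - 1) / (ℓ i : ℝ)) := by
  obtain ⟨M, rfl⟩ : ∃ M, n = M + 1 := ⟨n - 1, by omega⟩
  constructor
  · show _ = ∑ k ∈ Finset.Icc 1 (M + 1), Aterm α k (M + 1)
    have e1 : hseq α (M + 1) - hseq α (M + 1 - 1) = aseq α (M + 1) := by
      rw [h_eq_G, show M + 1 - 1 = M from rfl, h_eq_G, Gseq, Finset.sum_range_succ, Gseq]
      ring
    rw [e1, aseq, Finset.sum_range_succ', Aterm_zero_pos α (by omega), add_zero]
    exact range_to_Icc (fun k => Aterm α k (M + 1)) M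
  · show _ = ∑ k ∈ Finset.range (M + 1 + 1), (1 / (k.factorial : ℝ)) *
      ∑ m ∈ Finset.range (M + 1 + 1),
        ∑ ℓ ∈ (Finset.Nat.antidiagonalTuple k m).filter (fun ℓ => ∀ i, 1 ≤ ℓ i),
          ∏ i, (Real.exp (-α (ℓ i)) - 1) / (ℓ i : ℝ)
    have target : ∀ k, (1 / (k.factorial : ℝ)) *
        (∑ m ∈ Finset.range (M + 1 + 1),
          ∑ ℓ ∈ (Finset.Nat.antidiagonalTuple k m).filter (fun ℓ => ∀ i, 1 ≤ ℓ i),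
            ∏ i, (Real.exp (-α (ℓ i)) - 1) / (ℓ i : ℝ))
        = ∑ m ∈ Finset.range (M + 1 + 1), Aterm α k m := by
      intro k
      rw [Finset.mul_sum]
      rfl
    rw [Finset.sum_congr rfl fun k _ => target k, Finset.sum_comm, h_eq_G, Gseq]
    refine Finset.sum_congr rfl fun m hm => ?_
    rw [← sum_range_Aterm α m (M + 1) (by simpa using Nat.lt_succ_iff.1 (Finset.mem_range.1 hm))]
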